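/- Recovery of the (k+1)-factor bound via a rescaled DPP. Let A be an m×n real matrix and let k be an integer with 1 ≤ k < rank(A), so that OPT_k > 0. If S ~ DPP((1/OPT_k)·AᵀA), then E[|S|] ≤ k + 1 and E[Er_A(S)] ≤ (k+1)·OPT_k. -/

import Mathlib

open scoped BigOperators
open Matrix

namespace CSSP

variable {m n : ℕ}

/-- The `j`-th column of `A` as a vector in Euclidean space. -/
noncomputable def col {ι : Type*} (A : Matrix (Fin m) ι ℝ) (j : ι) :
    EuclideanSpace ℝ (Fin m) := WithLp.toLp 2 (fun i => A i j)

/-- The span of the columns of `A` indexed by `S`. -/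
noncomputable def colSpan {ι : Type*} (A : Matrix (Fin m) ι ℝ) (S : Finset ι) :
    Submodule ℝ (EuclideanSpace ℝ (Fin m)) :=
  Submodule.span ℝ {x | ∃ j ∈ S, x = col A j}

/-- `Er_A(S) = ‖A - P_S A‖_F²`, the squared Frobenius norm of the residual of projecting
the columns of `A` onto the span of the columns indexed by `S`. -/
noncomputable def Er {ι : Type*} [Fintype ι] (A : Matrix (Fin m) ι ℝ) (S : Finset ι) : ℝ :=
  ∑ j, ‖col A j - (Submodule.orthogonalProjectionOnto (colSpan A S) (col A j) : EuclideanSpace ℝ (Fin m))‖ ^ 2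

/-- Principal subdeterminant `det K_{S,S}`. -/
noncomputable def pdet (K : Matrix (Fin n) (Fin n) ℝ) (S : Finset (Fin n)) : ℝ :=
  (K.submatrix (fun i : {x : Fin n // x ∈ S} => (i : Fin n))
    (fun i : {x : Fin n // x ∈ S} => (i : Fin n))).det

/-- Expectation of `f` under the `k`-DPP with kernel `AᵀA`. -/
noncomputable def kDPPExp (A : Matrix (Fin m) (Fin n) ℝ) (k : ℕ)
    (f : Finset (Fin n) → ℝ) : ℝ :=
  (∑ S ∈ Finset.univ.filter (fun S : Finset (Fin n) => S.card = k), pdet (Aᵀ * A) S * f S) /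
    (∑ S ∈ Finset.univ.filter (fun S : Finset (Fin n) => S.card = k), pdet (Aᵀ * A) S)

/-- Expectation of `f` under the (random-size) DPP with kernel `(1/α)·AᵀA`. -/
noncomputable def dppExp (A : Matrix (Fin m) (Fin n) ℝ) (α : ℝ)
    (f : Finset (Fin n) → ℝ) : ℝ :=
  (∑ S : Finset (Fin n), α⁻¹ ^ S.card * pdet (Aᵀ * A) S * f S) /
    (1 + α⁻¹ • (Aᵀ * A)).det

/-- `lam` is the (multi-)set of eigenvalues of the symmetric matrix `K`. -/
def IsEigs (K : Matrix (Fin n) (Fin n) ℝ) (lam : Fin n → ℝ) : Prop :=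
  ∃ (hK : K.IsHermitian) (σ : Equiv.Perm (Fin n)), ∀ i, lam i = hK.eigenvalues (σ i)

/-- `OPT_k = Σ_{i > k} λ_i` (1-based indexing in the paper; `lam` here is 0-based). -/
noncomputable def opt (lam : Fin n → ℝ) (k : ℕ) : ℝ :=
  ∑ i ∈ Finset.univ.filter (fun i : Fin n => k ≤ (i : ℕ)), lam i

/-- Stable rank of order `s`: `sr_s = (Σ_{i > s} λ_i)/λ_{s+1}`. -/
noncomputable def srank (lam : Fin n → ℝ) (s : ℕ) (h : s < n) : ℝ :=
  (∑ i ∈ Finset.univ.filter (fun i : Fin n => s ≤ (i : ℕ)), lam i) / lam ⟨s, h⟩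

/-- Squared Frobenius norm. -/
noncomputable def frobSq {ι : Type*} [Fintype ι] (M : Matrix (Fin m) ι ℝ) : ℝ :=
  ∑ i, ∑ j, M i j ^ 2

/-- The squared Frobenius error of the best rank-`k` approximation of `A`. -/
noncomputable def optRank {ι : Type*} [Fintype ι] [DecidableEq ι]
    (A : Matrix (Fin m) ι ℝ) (k : ℕ) : ℝ :=
  sInf {x | ∃ B : Matrix (Fin m) ι ℝ, B.rank ≤ k ∧ x = frobSq (A - B)}



section Aux

lemma det_piecewise {n : ℕ} (M : Matrix (Fin n) (Fin n) ℝ) (S : Finset (Fin n)) :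
    Matrix.det (Matrix.of (S.piecewise M (1 : Matrix (Fin n) (Fin n) ℝ))) = pdet M S := by
  classical
  let e : {x : Fin n // x ∈ S} ⊕ {x : Fin n // ¬ x ∈ S} ≃ Fin n :=
    Equiv.sumCompl (fun x : Fin n => x ∈ S)
  rw [← Matrix.det_submatrix_equiv_self e]
  have h : (Matrix.of (S.piecewise M (1 : Matrix (Fin n) (Fin n) ℝ))).submatrix e e =
      Matrix.fromBlocks
        (M.submatrix (fun i : {x : Fin n // x ∈ S} => (i : Fin n))
          (fun i : {x : Fin n // x ∈ S} => (i : Fin n)))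
        (M.submatrix (fun i : {x : Fin n // x ∈ S} => (i : Fin n))
          (fun i : {x : Fin n // ¬ x ∈ S} => (i : Fin n)))
        0 1 := by
    ext i j
    rcases i with i | i <;> rcases j with j | j
    · simp [e, Finset.piecewise, i.2]
    · simp [e, Finset.piecewise, i.2]
    · have : (i : Fin n) ≠ (j : Fin n) := fun h => i.2 (h ▸ j.2)
      simp [e, Finset.piecewise, i.2, Matrix.one_apply, this]
    · by_cases hij : (i : Fin n) = (j : Fin n)
      · have : i = j := Subtype.ext hij
        simp [e, this, Finset.piecewise, j.2, Matrix.one_apply]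
      · have : i ≠ j := fun h => hij (congrArg _ h)
        simp [e, Finset.piecewise, i.2, Matrix.one_apply, hij, this]
  rw [h, Matrix.det_fromBlocks_zero₂₁, Matrix.det_one, mul_one]
  rfl

lemma det_one_add_smul_eq {n : ℕ} (M : Matrix (Fin n) (Fin n) ℝ) (x : ℝ) :
    (1 + x • M).det = ∑ S : Finset (Fin n), x ^ S.card * pdet M S := by
  classical
  have h1 : (1 + x • M).det
      = (Matrix.detRowAlternating : (Fin n → ℝ) [⋀^Fin n]→ₗ[ℝ] ℝ)
          ((fun i => (x • M) i) + (fun i => (1 : Matrix (Fin n) (Fin n) ℝ) i)) := by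
    congr 1
    ext i j
    simp [add_comm]
  rw [h1]
  refine Eq.trans (MultilinearMap.map_add_univ (Matrix.detRowAlternating :
      (Fin n → ℝ) [⋀^Fin n]→ₗ[ℝ] ℝ).toMultilinearMap _ _) ?_
  refine Finset.sum_congr rfl fun s _ => ?_
  have h2 : s.piecewise (fun i => (x • M) i) (fun i => (1 : Matrix (Fin n) (Fin n) ℝ) i)
      = s.piecewise (fun i => x • (s.piecewise M (1 : Matrix (Fin n) (Fin n) ℝ)) i)
          (s.piecewise M (1 : Matrix (Fin n) (Fin n) ℝ)) := by
    funext i j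
    by_cases hi : i ∈ s
    · simp [Finset.piecewise, hi, Matrix.smul_apply]
    · simp [Finset.piecewise, hi]
  rw [h2]
  refine Eq.trans (MultilinearMap.map_piecewise_smul (Matrix.detRowAlternating :
      (Fin n → ℝ) [⋀^Fin n]→ₗ[ℝ] ℝ).toMultilinearMap
      (fun _ => x) (s.piecewise M (1 : Matrix (Fin n) (Fin n) ℝ)) s) ?_
  rw [Finset.prod_const, smul_eq_mul]
  congr 1
  exact det_piecewise M s

lemma det_one_add_smul_herm {n : ℕ} {M : Matrix (Fin n) (Fin n) ℝ} (hM : M.IsHermitian) (x : ℝ) :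
    (1 + x • M).det = ∏ i, (1 + x * hM.eigenvalues i) := by
  classical
  set V : Matrix (Fin n) (Fin n) ℝ := (Matrix.IsHermitian.eigenvectorUnitary hM : Matrix (Fin n) (Fin n) ℝ) with hVdef
  have hVV : V * star V = 1 :=
    (Matrix.mem_unitaryGroup_iff).mp (Matrix.IsHermitian.eigenvectorUnitary hM).2
  have hsp : M = V * Matrix.diagonal (RCLike.ofReal ∘ hM.eigenvalues) * star V :=
    hM.spectral_theorem
  have hof : (RCLike.ofReal ∘ hM.eigenvalues : Fin n → ℝ) = hM.eigenvalues := by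
    funext i; simp [RCLike.ofReal_real_eq_id]
  have hD : (1 : Matrix (Fin n) (Fin n) ℝ) + x • Matrix.diagonal (RCLike.ofReal ∘ hM.eigenvalues)
      = Matrix.diagonal (fun i => 1 + x * hM.eigenvalues i) := by
    rw [hof]
    ext i j
    by_cases h : i = j <;>
      simp [Matrix.diagonal, Matrix.one_apply, h, Matrix.smul_apply]
  have key : 1 + x • M = V * Matrix.diagonal (fun i => 1 + x * hM.eigenvalues i) * star V := by
    have h1 : (1 : Matrix (Fin n) (Fin n) ℝ) = V * 1 * star V := by rw [mul_one, hVV]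
    calc 1 + x • M
        = V * 1 * star V + x • (V * Matrix.diagonal (RCLike.ofReal ∘ hM.eigenvalues) * star V) := by
          rw [← h1, ← hsp]
      _ = V * (1 + x • Matrix.diagonal (RCLike.ofReal ∘ hM.eigenvalues)) * star V := by
          rw [Matrix.mul_add, Matrix.add_mul, mul_smul_comm, smul_mul_assoc]
      _ = V * Matrix.diagonal (fun i => 1 + x * hM.eigenvalues i) * star V := by rw [hD]
  rw [key, Matrix.det_mul, Matrix.det_mul, Matrix.det_diagonal]
  have hdet1 : V.det * (star V).det = 1 := by
    rw [← Matrix.det_mul, hVV, Matrix.det_one]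
  calc V.det * (∏ i, (1 + x * hM.eigenvalues i)) * (star V).det
      = (V.det * (star V).det) * ∏ i, (1 + x * hM.eigenvalues i) := by ring
    _ = ∏ i, (1 + x * hM.eigenvalues i) := by rw [hdet1, one_mul]

lemma key_ratio {n : ℕ} (M : Matrix (Fin n) (Fin n) ℝ) (lam : Fin n → ℝ)
    (hfact : ∀ y : ℝ, (∑ S : Finset (Fin n), y ^ S.card * pdet M S) = ∏ i, (1 + y * lam i))
    (x : ℝ) :
    ∑ S : Finset (Fin n), (S.card : ℝ) * x ^ (S.card - 1) * pdet M S
      = ∑ i, (∏ j ∈ Finset.univ.erase i, (1 + x * lam j)) * lam i := by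
  classical
  have h1 : HasDerivAt (fun y : ℝ => ∑ S : Finset (Fin n), y ^ S.card * pdet M S)
      (∑ S : Finset (Fin n), (S.card : ℝ) * x ^ (S.card - 1) * pdet M S) x := by
    apply HasDerivAt.fun_sum
    intro S _
    exact (hasDerivAt_pow S.card x).mul_const (pdet M S)
  have h2 : HasDerivAt (fun y : ℝ => ∏ i, (1 + y * lam i))
      (∑ i, (∏ j ∈ Finset.univ.erase i, (1 + x * lam j)) • lam i) x := by
    apply HasDerivAt.fun_finsetProd (u := Finset.univ) (f := fun i y => 1 + y * lam i)
      (f' := fun i => lam i)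
    intro i _
    exact (hasDerivAt_mul_const (lam i)).const_add 1
  have hfun : (fun y : ℝ => ∑ S : Finset (Fin n), y ^ S.card * pdet M S)
      = fun y => ∏ i, (1 + y * lam i) := funext fun y => hfact y
  rw [hfun] at h1
  have := h1.unique h2
  simpa [smul_eq_mul] using this

noncomputable def gram {ι : Type*} (v : ι → EuclideanSpace ℝ (Fin m)) : Matrix ι ι ℝ :=
  Matrix.of fun i j => (inner ℝ (v i) (v j) : ℝ)

lemma gram_det_cons {ι : Type*} [Fintype ι] [DecidableEq ι]
    (v : ι → EuclideanSpace ℝ (Fin m)) (w : EuclideanSpace ℝ (Fin m)) :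
    (gram (Sum.elim (fun _ : Unit => w) v)).det =
      ‖w - (Submodule.orthogonalProjectionOnto (Submodule.span ℝ (Set.range v)) w :
        EuclideanSpace ℝ (Fin m))‖ ^ 2 * (gram v).det := by
  classical
  set K := Submodule.span ℝ (Set.range v) with hK
  set p : EuclideanSpace ℝ (Fin m) := (Submodule.orthogonalProjectionOnto K w : EuclideanSpace ℝ (Fin m)) with hp
  set u : EuclideanSpace ℝ (Fin m) := w - p with hudef
  have hpK : p ∈ K := (Submodule.orthogonalProjectionOnto K w).2
  obtain ⟨c, hc⟩ := (Submodule.mem_span_range_iff_exists_fun ℝ).mp hpK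
  have huo : u ∈ Kᗮ := by
    have := K.sub_starProjection_mem_orthogonal w
    rwa [Submodule.starProjection_apply] at this
  have huv : ∀ i, (inner ℝ u (v i) : ℝ) = 0 := by
    intro i
    have hvK : v i ∈ K := Submodule.subset_span ⟨i, rfl⟩
    have := Submodule.inner_right_of_mem_orthogonal hvK huo
    rwa [real_inner_comm] at this
  have hup : (inner ℝ u p : ℝ) = 0 := by
    have := Submodule.inner_right_of_mem_orthogonal hpK huo
    rwa [real_inner_comm] at this
  set M0 : Matrix (Unit ⊕ ι) (Unit ⊕ ι) ℝ := gram (Sum.elim (fun _ : Unit => w) v) with hM0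
  set s : Finset (Unit ⊕ ι) := Finset.univ.image Sum.inr with hs
  have hjs : (Sum.inl () : Unit ⊕ ι) ∉ s := by simp [hs]
  set cc : Unit ⊕ ι → ℝ := Sum.elim (fun _ => 0) (fun i => -(c i)) with hcc
  have hdet := Matrix.det_updateRow_sum_aux M0 s hjs cc 1
  have hsum : ∑ k ∈ s, cc k • M0 k = ∑ i : ι, (-(c i)) • M0 (Sum.inr i) := by
    rw [hs, Finset.sum_image (by intro a _ b _ h; exact Sum.inr_injective h)]
    rfl
  -- the updated matrix is a block matrix
  have expand : ∀ q : EuclideanSpace ℝ (Fin m),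
      (inner ℝ u q : ℝ) = (inner ℝ w q : ℝ) - ∑ i : ι, c i * (inner ℝ (v i) q : ℝ) := by
    intro q
    rw [hudef, inner_sub_left, ← hc, sum_inner]
    simp [real_inner_smul_left, Finset.mul_sum, mul_assoc]
  have hrow : ∀ z : Unit ⊕ ι,
      ((1:ℝ) • M0 (Sum.inl ()) + ∑ k ∈ s, cc k • M0 k) z
        = (inner ℝ u (Sum.elim (fun _ : Unit => w) v z) : ℝ) := by
    intro z
    rw [hsum]
    simp only [Pi.add_apply, Pi.smul_apply, one_smul, Finset.sum_apply, smul_eq_mul,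
      expand, hM0, gram, Matrix.of_apply, Sum.elim_inl, Sum.elim_inr, sub_eq_add_neg,
      neg_mul, Finset.sum_neg_distrib]
  have hblock : M0.updateRow (Sum.inl ()) ((1:ℝ) • M0 (Sum.inl ()) + ∑ k ∈ s, cc k • M0 k)
      = Matrix.fromBlocks (Matrix.of fun _ _ : Unit => (inner ℝ u w : ℝ)) 0
          (Matrix.of fun (i : ι) (_ : Unit) => (inner ℝ (v i) w : ℝ)) (gram v) := by
    ext z y
    rcases z with z | z
    · cases z
      rw [Matrix.updateRow_self, hrow y]
      rcases y with y | y
      · cases y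
        simp [Matrix.fromBlocks_apply₁₁]
      · simp [Matrix.fromBlocks_apply₁₂, huv y]
    · rw [Matrix.updateRow_ne (by simp)]
      rcases y with y | y
      · cases y
        simp [Matrix.fromBlocks_apply₂₁, hM0, gram]
      · simp [Matrix.fromBlocks_apply₂₂, hM0, gram]
  have hdet2 : M0.det = (inner ℝ u w : ℝ) * (gram v).det := by
    rw [← one_smul ℝ M0.det, ← hdet, hblock, Matrix.det_fromBlocks_zero₁₂]
    congr 1
    rw [Matrix.det_unique]
    rfl
  have huw : (inner ℝ u w : ℝ) = ‖w - p‖ ^ 2 := by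
    have hw : w = u + p := by rw [hudef]; abel
    have h1 : (inner ℝ u w : ℝ) = (inner ℝ u u : ℝ) + (inner ℝ u p : ℝ) := by
      conv_lhs => rw [hw, inner_add_right]
    rw [h1, hup, add_zero, real_inner_self_eq_norm_sq, hudef]
  rw [← hM0] at *
  rw [hdet2, huw]

lemma pdet_eq_gram (A : Matrix (Fin m) (Fin n) ℝ) (S : Finset (Fin n)) :
    pdet (Aᵀ * A) S = (gram (fun i : {x : Fin n // x ∈ S} => col A (i : Fin n))).det := by
  have h : ((Aᵀ * A).submatrix (fun i : {x : Fin n // x ∈ S} => (i : Fin n))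
      (fun i : {x : Fin n // x ∈ S} => (i : Fin n)))
      = gram (fun i : {x : Fin n // x ∈ S} => col A (i : Fin n)) := by
    ext i j
    simp [Matrix.mul_apply, col, gram, PiLp.inner_apply, RCLike.inner_apply, mul_comm]
  unfold pdet
  rw [h]

lemma colSpan_eq (A : Matrix (Fin m) (Fin n) ℝ) (S : Finset (Fin n)) :
    Submodule.span ℝ (Set.range fun i : {x : Fin n // x ∈ S} => col A (i : Fin n))
      = colSpan A S := by
  unfold colSpan
  congr 1
  ext x
  constructor
  · rintro ⟨i, rfl⟩
    exact ⟨i, i.2, rfl⟩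
  · rintro ⟨j, hj, rfl⟩
    exact ⟨⟨j, hj⟩, rfl⟩

lemma pdet_insert (A : Matrix (Fin m) (Fin n) ℝ) {S : Finset (Fin n)} {j : Fin n} (hj : j ∉ S) :
    pdet (Aᵀ * A) (insert j S) =
      ‖col A j - (Submodule.orthogonalProjectionOnto (colSpan A S) (col A j) :
        EuclideanSpace ℝ (Fin m))‖ ^ 2 * pdet (Aᵀ * A) S := by
  classical
  rw [pdet_eq_gram, pdet_eq_gram]
  let e : Unit ⊕ {x : Fin n // x ∈ S} ≃ {x : Fin n // x ∈ insert j S} :=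
    { toFun := Sum.elim (fun _ => ⟨j, Finset.mem_insert_self _ _⟩)
        (fun i => ⟨(i : Fin n), Finset.mem_insert_of_mem i.2⟩)
      invFun := fun x => if h : (x : Fin n) ∈ S then Sum.inr ⟨(x : Fin n), h⟩ else Sum.inl ()
      left_inv := by
        rintro (z | i)
        · simp [hj]
        · simp
      right_inv := by
        rintro ⟨x, hx⟩
        by_cases h : x ∈ S
        · simp [h]
        · have : x = j := by
            rcases Finset.mem_insert.mp hx with h1 | h1
            · exact h1
            · exact absurd h1 h
          subst this
          simp [h] }
  rw [← Matrix.det_submatrix_equiv_self e]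
  have hsub : ((gram fun i : {x : Fin n // x ∈ insert j S} => col A (i : Fin n)).submatrix e e)
      = gram (Sum.elim (fun _ : Unit => col A j)
          (fun i : {x : Fin n // x ∈ S} => col A (i : Fin n))) := by
    ext z y
    rcases z with z | z <;> rcases y with y | y <;> rfl
  rw [hsub, gram_det_cons, colSpan_eq]

lemma er_dist_zero (A : Matrix (Fin m) (Fin n) ℝ) {S : Finset (Fin n)} {j : Fin n} (hj : j ∈ S) :
    ‖col A j - (Submodule.orthogonalProjectionOnto (colSpan A S) (col A j) :
      EuclideanSpace ℝ (Fin m))‖ ^ 2 = 0 := by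
  have hmem : col A j ∈ colSpan A S := Submodule.subset_span ⟨j, hj, rfl⟩
  rw [← Submodule.starProjection_apply, Submodule.starProjection_eq_self_iff.mpr hmem]
  simp

lemma sum_pdet_er (A : Matrix (Fin m) (Fin n) ℝ) {x : ℝ} (hx : x ≠ 0) :
    ∑ S : Finset (Fin n), x ^ S.card * pdet (Aᵀ * A) S * Er A S
      = x⁻¹ * ∑ S : Finset (Fin n), (S.card : ℝ) * x ^ S.card * pdet (Aᵀ * A) S := by
  classical
  have step1 : ∀ S : Finset (Fin n), x ^ S.card * pdet (Aᵀ * A) S * Er A S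
      = ∑ j ∈ Sᶜ, x ^ S.card * pdet (Aᵀ * A) (insert j S) := by
    intro S
    unfold Er
    rw [Finset.mul_sum]
    rw [← Finset.sum_subset (Finset.subset_univ Sᶜ) (fun j _ hj => by
      have hjS : j ∈ S := by simpa using hj
      rw [er_dist_zero A hjS, mul_zero])]
    refine Finset.sum_congr rfl fun j hj => ?_
    have hjS : j ∉ S := by simpa using hj
    rw [pdet_insert A hjS]
    ring
  calc ∑ S : Finset (Fin n), x ^ S.card * pdet (Aᵀ * A) S * Er A S
      = ∑ S : Finset (Fin n), ∑ j ∈ Sᶜ, x ^ S.card * pdet (Aᵀ * A) (insert j S) :=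
        Finset.sum_congr rfl fun S _ => step1 S
    _ = ∑ T : Finset (Fin n), ∑ j ∈ T, x⁻¹ * (x ^ T.card * pdet (Aᵀ * A) T) := by
        rw [Finset.sum_sigma', Finset.sum_sigma']
        refine Finset.sum_nbij' (fun p => ⟨insert p.2 p.1, p.2⟩) (fun p => ⟨p.1.erase p.2, p.2⟩)
          ?_ ?_ ?_ ?_ ?_
        · rintro ⟨S, j⟩ hp
          have hj : j ∉ S := by simpa using (Finset.mem_sigma.mp hp).2
          simp [Finset.mem_sigma]
        · rintro ⟨T, j⟩ hp
          have hj : j ∈ T := (Finset.mem_sigma.mp hp).2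
          simp [Finset.mem_sigma]
        · rintro ⟨S, j⟩ hp
          have hj : j ∉ S := by simpa using (Finset.mem_sigma.mp hp).2
          simp [Finset.erase_insert hj]
        · rintro ⟨T, j⟩ hp
          have hj : j ∈ T := (Finset.mem_sigma.mp hp).2
          simp [Finset.insert_erase hj]
        · rintro ⟨S, j⟩ hp
          have hj : j ∉ S := by simpa using (Finset.mem_sigma.mp hp).2
          have hcard : (insert j S).card = S.card + 1 := Finset.card_insert_of_notMem hj
          simp only [hcard]
          rw [pow_succ]
          field_simp
    _ = x⁻¹ * ∑ S : Finset (Fin n), (S.card : ℝ) * x ^ S.card * pdet (Aᵀ * A) S := by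
        rw [Finset.mul_sum]
        refine Finset.sum_congr rfl fun T _ => ?_
        rw [Finset.sum_const, nsmul_eq_mul]
        ring

end Aux

/-- Recovery of the `(k+1)`-factor bound via a rescaled DPP: for `1 ≤ k < rank(A)` (so that
`OPT_k > 0`), if `S ~ DPP((1/OPT_k)·AᵀA)` then `E[|S|] ≤ k+1` and
`E[Er_A(S)] ≤ (k+1)·OPT_k`. -/
theorem kplus1_bound {m n : ℕ} (A : Matrix (Fin m) (Fin n) ℝ)
    (lam : Fin n → ℝ) (hlam : Antitone lam) (heig : IsEigs (Aᵀ * A) lam)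
    (k : ℕ) (hk1 : 1 ≤ k) (hk2 : k < A.rank) :
    0 < opt lam k ∧
      dppExp A (opt lam k) (fun S => (S.card : ℝ)) ≤ (k : ℝ) + 1 ∧
      dppExp A (opt lam k) (Er A) ≤ ((k : ℝ) + 1) * opt lam k := by
  classical
  obtain ⟨hK, σ, hσ⟩ := heig
  have hnn : ∀ i, 0 ≤ lam i := by
    intro i
    rw [hσ i]
    have hPSD : (Aᵀ * A).PosSemidef := by
      have h := Matrix.posSemidef_conjTranspose_mul_self A
      rwa [Matrix.conjTranspose_eq_transpose_of_trivial] at h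
    exact hPSD.eigenvalues_nonneg (σ i)
  have hkn : k < n := lt_of_lt_of_le hk2 (Matrix.rank_le_width A)
  have hlamk : 0 < lam ⟨k, hkn⟩ := by
    by_contra hcon
    have h0 : lam ⟨k, hkn⟩ = 0 := le_antisymm (not_lt.mp hcon) (hnn _)
    have hz : ∀ i : Fin n, k ≤ (i : ℕ) → hK.eigenvalues (σ i) = 0 := by
      intro i hi
      have hle : lam i ≤ lam ⟨k, hkn⟩ := hlam (by simpa [Fin.le_def] using hi)
      have : lam i = 0 := le_antisymm (h0 ▸ hle) (hnn i)
      rw [← hσ i]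
      exact this
    have hrank : A.rank = Fintype.card {i : Fin n // hK.eigenvalues i ≠ 0} := by
      rw [← Matrix.rank_transpose_mul_self]
      exact hK.rank_eq_card_non_zero_eigs
    have hval : ∀ i : {i : Fin n // hK.eigenvalues i ≠ 0}, ((σ.symm (i : Fin n)) : ℕ) < k := by
      intro i
      by_contra hge
      refine i.2 ?_
      have := hz (σ.symm (i : Fin n)) (not_lt.mp hge)
      simpa using this
    have hcard : Fintype.card {i : Fin n // hK.eigenvalues i ≠ 0} ≤ k := by
      have hinj : Function.Injective
          (fun i : {i : Fin n // hK.eigenvalues i ≠ 0} =>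
            (⟨((σ.symm (i : Fin n)) : ℕ), hval i⟩ : Fin k)) := by
        intro a b hab
        have h1 : ((σ.symm (a : Fin n)) : ℕ) = ((σ.symm (b : Fin n)) : ℕ) := by
          have := congrArg Fin.val hab
          simpa using this
        exact Subtype.ext (σ.symm.injective (Fin.val_injective h1))
      simpa using Fintype.card_le_of_injective _ hinj
    omega
  have hopt : 0 < opt lam k := by
    refine lt_of_lt_of_le hlamk (Finset.single_le_sum (fun i _ => hnn i) ?_)
    simp
  set α := opt lam k with hαdef
  have hα : 0 < α := hopt
  set x := α⁻¹ with hxdef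
  have hx : 0 < x := inv_pos.mpr hα
  have hfact : ∀ y : ℝ,
      (∑ S : Finset (Fin n), y ^ S.card * pdet (Aᵀ * A) S) = ∏ i, (1 + y * lam i) := by
    intro y
    rw [← det_one_add_smul_eq, det_one_add_smul_herm hK]
    rw [← Equiv.prod_comp σ fun i => 1 + y * hK.eigenvalues i]
    exact (Finset.prod_congr rfl fun i _ => by rw [hσ i]).symm
  have hposi : ∀ i : Fin n, (0:ℝ) < 1 + x * lam i := fun i =>
    add_pos_of_pos_of_nonneg one_pos (mul_nonneg hx.le (hnn i))
  have Fpos : 0 < ∏ i, (1 + x * lam i) := Finset.prod_pos fun i _ => hposi i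
  have hden : (1 + x • (Aᵀ * A)).det = ∏ i, (1 + x * lam i) := by
    rw [det_one_add_smul_eq, hfact]
  have hD := key_ratio (Aᵀ * A) lam hfact x
  have hN1 : ∑ S : Finset (Fin n), (S.card : ℝ) * x ^ S.card * pdet (Aᵀ * A) S
      = x * ∑ S : Finset (Fin n), (S.card : ℝ) * x ^ (S.card - 1) * pdet (Aᵀ * A) S := by
    rw [Finset.mul_sum]
    refine Finset.sum_congr rfl fun S _ => ?_
    rcases Nat.eq_zero_or_pos S.card with h | h
    · simp [h]
    · have hpow : x ^ S.card = x * x ^ (S.card - 1) := by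
        conv_lhs => rw [← Nat.succ_pred_eq_of_pos h]
        rw [pow_succ', Nat.pred_eq_sub_one]
      rw [hpow]; ring
  have hratio : (∑ S : Finset (Fin n), (S.card : ℝ) * x ^ S.card * pdet (Aᵀ * A) S)
      = (∑ i, x * lam i / (1 + x * lam i)) * ∏ i, (1 + x * lam i) := by
    rw [hN1, hD, Finset.sum_mul, Finset.mul_sum]
    refine Finset.sum_congr rfl fun i _ => ?_
    have hF : (∏ j, (1 + x * lam j))
        = (1 + x * lam i) * ∏ j ∈ Finset.univ.erase i, (1 + x * lam j) :=
      (Finset.mul_prod_erase _ _ (Finset.mem_univ i)).symm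
    rw [hF]
    have hne : (1 + x * lam i) ≠ 0 := (hposi i).ne'
    field_simp
  have hsumratio : (∑ i, x * lam i / (1 + x * lam i)) ≤ (k : ℝ) + 1 := by
    rw [← Finset.sum_filter_add_sum_filter_not Finset.univ (fun i : Fin n => (i : ℕ) < k)
      (fun i => x * lam i / (1 + x * lam i))]
    have h1 : (∑ i ∈ Finset.univ.filter (fun i : Fin n => (i : ℕ) < k),
        x * lam i / (1 + x * lam i)) ≤ (k : ℝ) := by
      have hcard : (Finset.univ.filter (fun i : Fin n => (i : ℕ) < k)).card ≤ k := by
        have h := Finset.card_le_card_of_injOn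
          (s := Finset.univ.filter (fun i : Fin n => (i : ℕ) < k))
          (t := Finset.range k) (fun i : Fin n => (i : ℕ))
          (fun i hi => Finset.mem_range.mpr (Finset.mem_filter.mp hi).2)
          (fun a _ b _ h => Fin.val_injective h)
        simpa using h
      calc (∑ i ∈ Finset.univ.filter (fun i : Fin n => (i : ℕ) < k),
            x * lam i / (1 + x * lam i))
          ≤ (Finset.univ.filter (fun i : Fin n => (i : ℕ) < k)).card • (1:ℝ) := by
            refine Finset.sum_le_card_nsmul _ _ 1 fun i _ => ?_
            rw [div_le_one (hposi i)]
            linarith [mul_nonneg hx.le (hnn i)]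
        _ ≤ (k : ℝ) := by
            rw [nsmul_eq_mul, mul_one]
            exact_mod_cast hcard
    have h2 : (∑ i ∈ Finset.univ.filter (fun i : Fin n => ¬ (i : ℕ) < k),
        x * lam i / (1 + x * lam i)) ≤ 1 := by
      have hfeq : Finset.univ.filter (fun i : Fin n => ¬ (i : ℕ) < k)
          = Finset.univ.filter (fun i : Fin n => k ≤ (i : ℕ)) := by
        apply Finset.filter_congr
        intro i _
        simp [not_lt]
      calc (∑ i ∈ Finset.univ.filter (fun i : Fin n => ¬ (i : ℕ) < k),
            x * lam i / (1 + x * lam i))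
          ≤ ∑ i ∈ Finset.univ.filter (fun i : Fin n => ¬ (i : ℕ) < k), x * lam i := by
            refine Finset.sum_le_sum fun i _ => ?_
            refine div_le_self (mul_nonneg hx.le (hnn i)) ?_
            linarith [mul_nonneg hx.le (hnn i)]
        _ = x * α := by
            rw [hfeq, ← Finset.mul_sum, hαdef]
            rfl
        _ = 1 := inv_mul_cancel₀ hα.ne'
    linarith
  have hnum1 : (∑ S : Finset (Fin n), α⁻¹ ^ S.card * pdet (Aᵀ * A) S * (S.card : ℝ))
      = ∑ S : Finset (Fin n), (S.card : ℝ) * x ^ S.card * pdet (Aᵀ * A) S := by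
    refine Finset.sum_congr rfl fun S _ => ?_
    rw [← hxdef]
    ring
  have hE1 : dppExp A α (fun S => (S.card : ℝ)) = ∑ i, x * lam i / (1 + x * lam i) := by
    unfold dppExp
    rw [hnum1, hratio, ← hxdef, hden]
    exact mul_div_cancel_right₀ _ Fpos.ne'
  have hE2 : dppExp A α (Er A) = α * ∑ i, x * lam i / (1 + x * lam i) := by
    unfold dppExp
    rw [← hxdef, hden]
    have hnum2 : (∑ S : Finset (Fin n), x ^ S.card * pdet (Aᵀ * A) S * Er A S)
        = α * ((∑ i, x * lam i / (1 + x * lam i)) * ∏ i, (1 + x * lam i)) := by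
      rw [sum_pdet_er A hx.ne', ← hratio, hxdef, inv_inv]
    rw [hnum2, mul_div_assoc, mul_div_cancel_right₀ _ Fpos.ne']
  refine ⟨hopt, ?_, ?_⟩
  · rw [hE1]
    exact hsumratio
  · rw [hE2]
    calc α * ∑ i, x * lam i / (1 + x * lam i) ≤ α * ((k : ℝ) + 1) :=
          mul_le_mul_of_nonneg_left hsumratio hα.le
      _ = ((k : ℝ) + 1) * α := by ring


end CSSP
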